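/- Let 0 < |ζ| < 1/2 and suppose λ_{jt} satisfies |λ_{jt}| ≤ C j^ζ t^{-ζ-1} for 1 ≤ j ≤ t and |λ_{jt}| ≤ C j^{ζ-1} max(j^{-ζ}, t^{-ζ}) for j > t. Then Σ_{j=0}^∞ (Σ_{t=1}^n λ_{jt})² ≤ C' n for all n ≥ 1. -/

import Mathlib

open Finset

-- tangent line inequality for rpow, 0 ≤ p ≤ 1
lemma st14_core {p b : ℝ} (hp0 : 0 ≤ p) (hp1 : p ≤ 1) (hb : 1 ≤ b) :
    (b - 1) ^ p ≤ b ^ p - p * b ^ (p - 1) := by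
  have hb0 : (0:ℝ) < b := lt_of_lt_of_le one_pos hb
  have hs : (-1 : ℝ) ≤ -1 / b := by
    rw [neg_div]
    simp only [neg_le_neg_iff]
    rw [div_le_one hb0]; exact hb
  have h := rpow_one_add_le_one_add_mul_self hs hp0 hp1
  have hbase : (1 : ℝ) + -1 / b = (b - 1) / b := by field_simp; ring
  rw [hbase] at h
  have hbm : (0:ℝ) ≤ (b-1)/b := div_nonneg (by linarith) hb0.le
  have h2 := mul_le_mul_of_nonneg_right h (Real.rpow_nonneg hb0.le p)
  have h3 : ((b-1)/b) ^ p * b ^ p = (b-1) ^ p := by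
    rw [Real.div_rpow (by linarith) hb0.le]
    field_simp
  rw [h3] at h2
  have h4 : (1 + p * (-1 / b)) * b ^ p = b ^ p - p * b ^ (p - 1) := by
    rw [Real.rpow_sub_one (ne_of_gt hb0)]
    field_simp; ring
  linarith [h4 ▸ h2]

-- ∑_{t=1}^m t^{-δ} ≤ m^{1-δ}/(1-δ)
lemma st14_A {δ : ℝ} (h0 : 0 < δ) (h1 : δ < 1) (m : ℕ) :
    ∑ t ∈ Icc 1 m, (t:ℝ) ^ (-δ) ≤ (m:ℝ) ^ (1 - δ) / (1 - δ) := by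
  induction m with
  | zero =>
      simp [Real.zero_rpow (by linarith : (1:ℝ) - δ ≠ 0)]
  | succ m ih =>
      rw [Finset.sum_Icc_succ_top (by omega)]
      have hb : (1:ℝ) ≤ (m:ℝ) + 1 := by have := Nat.cast_nonneg (α := ℝ) m; linarith
      have hc := st14_core (p := 1 - δ) (by linarith) (by linarith) hb
      have he : ((m:ℝ) + 1) - 1 = (m:ℝ) := by ring
      rw [he] at hc
      have he2 : (1 - δ) - 1 = -δ := by ring
      rw [he2] at hc
      have hcast : ((m+1 : ℕ) : ℝ) = (m:ℝ) + 1 := by push_cast; ring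
      rw [hcast]
      have : ((m:ℝ)+1) ^ (-δ) ≤ (((m:ℝ)+1) ^ (1-δ) - (m:ℝ) ^ (1-δ)) / (1-δ) := by
        rw [le_div_iff₀ (by linarith)]
        nlinarith [Real.rpow_nonneg (show (0:ℝ) ≤ (m:ℝ)+1 by positivity) (-δ)]
      calc ∑ t ∈ Icc 1 m, (t:ℝ) ^ (-δ) + ((m:ℝ)+1) ^ (-δ)
          ≤ (m:ℝ) ^ (1-δ) / (1-δ) + (((m:ℝ)+1) ^ (1-δ) - (m:ℝ) ^ (1-δ)) / (1-δ) :=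
            add_le_add ih this
        _ = ((m:ℝ)+1) ^ (1-δ) / (1-δ) := by ring

lemma st14_coreB {ε a : ℝ} (hε0 : 0 < ε) (hε1 : ε ≤ 1) (ha : 1 ≤ a) :
    ε * (a + 1) ^ (-1 - ε) ≤ a ^ (-ε) - (a + 1) ^ (-ε) := by
  have ha0 : (0:ℝ) < a := lt_of_lt_of_le one_pos ha
  have hb0 : (0:ℝ) < a + 1 := by linarith
  have hs : (-1:ℝ) ≤ -1/(a+1) := by
    rw [neg_div, neg_le_neg_iff, div_le_one hb0]; linarith
  have h := rpow_one_add_le_one_add_mul_self hs hε0.le hε1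
  have hbase : (1:ℝ) + -1/(a+1) = a/(a+1) := by field_simp; ring
  rw [hbase] at h
  -- multiply by a^{-ε} > 0
  have hae : (0:ℝ) < a ^ (-ε) := Real.rpow_pos_of_pos ha0 _
  have h2 := mul_le_mul_of_nonneg_right h hae.le
  have h3 : (a/(a+1)) ^ ε * a ^ (-ε) = (a+1) ^ (-ε) := by
    rw [Real.div_rpow ha0.le hb0.le, Real.rpow_neg ha0.le, Real.rpow_neg hb0.le]
    have h4 : a ^ ε ≠ 0 := ne_of_gt (Real.rpow_pos_of_pos ha0 _)
    field_simp
  rw [h3] at h2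
  -- h2 : (a+1)^{-ε} ≤ (1 + ε * (-1/(a+1))) * a^{-ε} = a^{-ε} - ε a^{-ε}/(a+1)
  have hmono : (a+1) ^ (-ε) ≤ a ^ (-ε) := by
    rw [Real.rpow_neg ha0.le, Real.rpow_neg hb0.le]
    exact inv_anti₀ (Real.rpow_pos_of_pos ha0 _)
      (Real.rpow_le_rpow ha0.le (by linarith) hε0.le)
  have hsplit : (a+1) ^ (-1-ε) = (a+1) ^ (-ε) / (a+1) := by
    rw [show (-1-ε : ℝ) = -ε - 1 by ring, Real.rpow_sub_one (ne_of_gt hb0)]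
  rw [hsplit]
  have key : ε * ((a+1) ^ (-ε) / (a+1)) ≤ ε * (a ^ (-ε) / (a+1)) := by
    gcongr
  have h5 : (1 + ε * (-1/(a+1))) * a ^ (-ε) = a ^ (-ε) - ε * (a ^ (-ε) / (a+1)) := by
    field_simp; ring
  rw [h5] at h2
  linarith

-- telescoping tail sum
lemma st14_B {ε : ℝ} (hε0 : 0 < ε) (hε1 : ε ≤ 1) (j : ℕ) (hj : 1 ≤ j) (k : ℕ) :
    ∑ t ∈ Icc (j+1) (j+k), (t:ℝ) ^ (-1-ε) ≤ (1/ε) * ((j:ℝ) ^ (-ε) - ((j+k:ℕ):ℝ) ^ (-ε)) := by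
  induction k with
  | zero => simp
  | succ k ih =>
      have : j + (k+1) = (j + k) + 1 := by omega
      rw [this, Finset.sum_Icc_succ_top (by omega)]
      have ha : (1:ℝ) ≤ ((j+k:ℕ):ℝ) := by
        have : (1:ℕ) ≤ j + k := by omega
        exact_mod_cast this
      have hc := st14_coreB hε0 hε1 ha
      have hcast : ((j+k+1:ℕ):ℝ) = ((j+k:ℕ):ℝ) + 1 := by push_cast; ring
      rw [hcast]
      have hterm : (((j+k:ℕ):ℝ) + 1) ^ (-1-ε)
          ≤ (1/ε) * (((j+k:ℕ):ℝ) ^ (-ε) - (((j+k:ℕ):ℝ)+1) ^ (-ε)) := by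
        rw [show (1/ε) * (((j+k:ℕ):ℝ) ^ (-ε) - (((j+k:ℕ):ℝ)+1) ^ (-ε))
            = (((j+k:ℕ):ℝ) ^ (-ε) - (((j+k:ℕ):ℝ)+1) ^ (-ε)) / ε by ring,
          le_div_iff₀ hε0]
        linarith [hc]
      calc ∑ t ∈ Icc (j+1) (j+k), (t:ℝ) ^ (-1-ε) + (((j+k:ℕ):ℝ)+1) ^ (-1-ε)
          ≤ (1/ε) * ((j:ℝ) ^ (-ε) - ((j+k:ℕ):ℝ) ^ (-ε))
            + (1/ε) * (((j+k:ℕ):ℝ) ^ (-ε) - (((j+k:ℕ):ℝ)+1) ^ (-ε)) := add_le_add ih hterm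
        _ = (1/ε) * ((j:ℝ) ^ (-ε) - (((j+k:ℕ):ℝ)+1) ^ (-ε)) := by ring

lemma st14_Icc_tail {ε : ℝ} (hε0 : 0 < ε) (hε1 : ε ≤ 1) (j n : ℕ) (hj : 1 ≤ j) :
    ∑ t ∈ Icc j n, (t:ℝ) ^ (-1-ε) ≤ (1 + 1/ε) * (j:ℝ) ^ (-ε) := by
  have hj0 : (0:ℝ) < (j:ℝ) := by exact_mod_cast hj
  have hjpos : (0:ℝ) ≤ (1 + 1/ε) * (j:ℝ) ^ (-ε) := by positivity
  by_cases hcase : n < j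
  · rw [Finset.Icc_eq_empty (by omega)]; simpa using hjpos
  · push_neg at hcase
    have hsplit : Icc j n = {j} ∪ Icc (j+1) n := by
      ext t; simp only [Finset.mem_Icc, Finset.mem_union, Finset.mem_singleton]; omega
    have hdisj : Disjoint ({j} : Finset ℕ) (Icc (j+1) n) := by
      simp only [Finset.disjoint_left, Finset.mem_singleton, Finset.mem_Icc]; omega
    rw [hsplit, Finset.sum_union hdisj, Finset.sum_singleton]
    have h1 : (j:ℝ) ^ (-1-ε) ≤ (j:ℝ) ^ (-ε) :=
      Real.rpow_le_rpow_of_exponent_le (by exact_mod_cast hj) (by linarith)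
    have h2 : ∑ t ∈ Icc (j+1) n, (t:ℝ) ^ (-1-ε) ≤ (1/ε) * (j:ℝ) ^ (-ε) := by
      have hn : n = j + (n - j) := by omega
      rw [hn]
      refine le_trans (st14_B hε0 hε1 j hj (n - j)) ?_
      have : (0:ℝ) ≤ ((j + (n-j) : ℕ):ℝ) ^ (-ε) := Real.rpow_nonneg (by positivity) _
      nlinarith [one_div_pos.mpr hε0]
    linarith

lemma st14_range_tail {ε : ℝ} (hε0 : 0 < ε) (hε1 : ε ≤ 1) (n : ℕ) (hn : 1 ≤ n) (N : ℕ) :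
    ∑ i ∈ range N, ((n+1+i:ℕ):ℝ) ^ (-1-ε) ≤ (1/ε) * (n:ℝ) ^ (-ε) := by
  have h1 : ∑ i ∈ range N, ((n+1+i:ℕ):ℝ) ^ (-1-ε)
      = ∑ t ∈ Ico (n+1) (n+1+N), (t:ℝ) ^ (-1-ε) := by
    rw [Finset.sum_Ico_eq_sum_range]
    simp only [Nat.add_sub_cancel_left]
  have h2 : Ico (n+1) (n+1+N) = Icc (n+1) (n+N) := by
    rw [show n+1+N = (n+N)+1 by omega, Finset.Ico_add_one_right_eq_Icc]
  rw [h1, h2]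
  refine le_trans (st14_B hε0 hε1 n hn N) ?_
  have : (0:ℝ) ≤ ((n + N : ℕ):ℝ) ^ (-ε) := Real.rpow_nonneg (by positivity) _
  nlinarith [one_div_pos.mpr hε0]

lemma st14_key (ζ θ : ℝ) (hθ0 : 0 < θ) (hθh : θ < 1/2)
    (hcase : ζ = θ ∨ ζ = -θ)
    (lam : ℕ → ℕ → ℝ) (C : ℝ) (hC : 0 ≤ C)
    (h1 : ∀ j t : ℕ, 1 ≤ j → j ≤ t →
      |lam j t| ≤ C * (j : ℝ) ^ ζ * (t : ℝ) ^ (-ζ - 1))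
    (h2 : ∀ j t : ℕ, 1 ≤ t → t < j →
      |lam j t| ≤ C * (j : ℝ) ^ (ζ - 1) * max ((j : ℝ) ^ (-ζ)) ((t : ℝ) ^ (-ζ)))
    (n j : ℕ) (hn : 1 ≤ n) (hj : 1 ≤ j) :
    ∑ t ∈ Icc 1 n, |lam j t| ≤
      (C*(1/θ + 1/(1-θ) + 2) + 1) *
        (if j ≤ n then ((n:ℝ)/(j:ℝ)) ^ θ else ((n:ℝ)/(j:ℝ)) ^ (1-θ)) := by
  have hθ1 : θ < 1 := by linarith
  have hj0 : (0:ℝ) < (j:ℝ) := by exact_mod_cast hj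
  have hn0 : (0:ℝ) < (n:ℝ) := by exact_mod_cast hn
  have hjr : (1:ℝ) ≤ (j:ℝ) := by exact_mod_cast hj
  set A : ℝ := C*(1/θ + 1/(1-θ) + 2) + 1 with hAdef
  set r : ℝ := (n:ℝ)/(j:ℝ) with hrdef
  have hr0 : (0:ℝ) < r := by positivity
  have hA : A = C/θ + C/(1-θ) + 2*C + 1 := by rw [hAdef]; ring
  have hdθ : 0 ≤ C/θ := div_nonneg hC hθ0.le
  have hd1θ : 0 ≤ C/(1-θ) := div_nonneg hC (by linarith)
  have hA0 : 0 < A := by rw [hA]; linarith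
  set m := min (j-1) n with hm
  have hsplit : Icc 1 n = Icc 1 m ∪ Icc j n := by
    ext t; simp only [mem_Icc, mem_union]; omega
  have hdisj : Disjoint (Icc 1 m) (Icc j n) := by
    simp only [Finset.disjoint_left, mem_Icc]; omega
  rw [hsplit, Finset.sum_union hdisj]
  have hmj : (m:ℝ) ≤ (j:ℝ) := by exact_mod_cast (show m ≤ j by omega)
  rcases hcase with hpos | hneg
  · -- ζ = θ > 0
    subst hpos
    -- Σ₁ bound
    have hterm1 : ∀ t ∈ Icc 1 m, |lam j t| ≤ (C * (j:ℝ)^(ζ-1)) * (t:ℝ)^(-ζ) := by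
      intro t ht
      simp only [mem_Icc] at ht
      have ht0 : (0:ℝ) < (t:ℝ) := by exact_mod_cast ht.1
      have htj : t < j := by omega
      have hb := h2 j t ht.1 htj
      have hmax : max ((j:ℝ)^(-ζ)) ((t:ℝ)^(-ζ)) = (t:ℝ)^(-ζ) := by
        apply max_eq_right
        rw [Real.rpow_neg hj0.le, Real.rpow_neg ht0.le]
        exact inv_anti₀ (Real.rpow_pos_of_pos ht0 _)
          (Real.rpow_le_rpow ht0.le (by exact_mod_cast htj.le) hθ0.le)
      rw [hmax] at hb
      exact le_of_le_of_eq hb (by ring)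
    have hS1 : ∑ t ∈ Icc 1 m, |lam j t|
        ≤ (C * (j:ℝ)^(ζ-1)) * ((m:ℝ)^(1-ζ)/(1-ζ)) := by
      calc ∑ t ∈ Icc 1 m, |lam j t| ≤ ∑ t ∈ Icc 1 m, (C * (j:ℝ)^(ζ-1)) * (t:ℝ)^(-ζ) :=
            Finset.sum_le_sum hterm1
        _ = (C * (j:ℝ)^(ζ-1)) * ∑ t ∈ Icc 1 m, (t:ℝ)^(-ζ) := by rw [← Finset.mul_sum]
        _ ≤ _ := mul_le_mul_of_nonneg_left (st14_A hθ0 hθ1 m) (by positivity)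
    -- Σ₂ bound
    have hterm2 : ∀ t ∈ Icc j n, |lam j t| ≤ (C * (j:ℝ)^ζ) * (t:ℝ)^(-1-ζ) := by
      intro t ht
      simp only [mem_Icc] at ht
      have hb := h1 j t hj ht.1
      rw [show (-ζ-1 : ℝ) = -1-ζ by ring] at hb
      exact le_of_le_of_eq hb (by ring)
    have hjj : (j:ℝ)^ζ * (j:ℝ)^(-ζ) = 1 := by
      rw [← Real.rpow_add hj0]; simp
    have hS2 : ∑ t ∈ Icc j n, |lam j t| ≤ C * (1 + 1/ζ) := by
      calc ∑ t ∈ Icc j n, |lam j t| ≤ ∑ t ∈ Icc j n, (C * (j:ℝ)^ζ) * (t:ℝ)^(-1-ζ) :=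
            Finset.sum_le_sum hterm2
        _ = (C * (j:ℝ)^ζ) * ∑ t ∈ Icc j n, (t:ℝ)^(-1-ζ) := by rw [← Finset.mul_sum]
        _ ≤ (C * (j:ℝ)^ζ) * ((1 + 1/ζ) * (j:ℝ)^(-ζ)) :=
            mul_le_mul_of_nonneg_left (st14_Icc_tail hθ0 (by linarith) j n hj) (by positivity)
        _ = C * (1 + 1/ζ) * ((j:ℝ)^ζ * (j:ℝ)^(-ζ)) := by ring
        _ = C * (1 + 1/ζ) := by rw [hjj, mul_one]
    by_cases hjn : j ≤ n
    · rw [if_pos hjn]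
      have hr1 : (1:ℝ) ≤ r := by
        rw [hrdef, le_div_iff₀ hj0, one_mul]; exact_mod_cast hjn
      have hR1 : (1:ℝ) ≤ r ^ ζ := Real.one_le_rpow hr1 hθ0.le
      have hS1' : ∑ t ∈ Icc 1 m, |lam j t| ≤ C/(1-ζ) := by
        refine le_trans hS1 ?_
        have hmono : (m:ℝ)^(1-ζ) ≤ (j:ℝ)^(1-ζ) :=
          Real.rpow_le_rpow (by positivity) hmj (by linarith)
        have hjj2 : (j:ℝ)^(ζ-1) * (j:ℝ)^(1-ζ) = 1 := by
          rw [← Real.rpow_add hj0]; norm_num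
        calc (C * (j:ℝ)^(ζ-1)) * ((m:ℝ)^(1-ζ)/(1-ζ))
            ≤ (C * (j:ℝ)^(ζ-1)) * ((j:ℝ)^(1-ζ)/(1-ζ)) := by
              apply mul_le_mul_of_nonneg_left _ (by positivity)
              exact div_le_div_of_nonneg_right hmono (by linarith) |> fun h => h
          _ = (C/(1-ζ)) * ((j:ℝ)^(ζ-1) * (j:ℝ)^(1-ζ)) := by ring
          _ = C/(1-ζ) := by rw [hjj2, mul_one]
      have hsum : C/(1-ζ) + C*(1+1/ζ) ≤ A := by
        rw [hA]
        have : C*(1+1/ζ) = C + C/ζ := by ring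
        linarith
      calc ∑ t ∈ Icc 1 m, |lam j t| + ∑ t ∈ Icc j n, |lam j t|
          ≤ C/(1-ζ) + C*(1+1/ζ) := add_le_add hS1' hS2
        _ ≤ A := hsum
        _ ≤ A * r^ζ := le_mul_of_one_le_right hA0.le hR1
    · rw [if_neg hjn]
      push_neg at hjn
      have hmn : m = n := by omega
      have hempty : Icc j n = (∅ : Finset ℕ) := Finset.Icc_eq_empty (by omega)
      rw [hempty, Finset.sum_empty, add_zero]
      have hrp : (n:ℝ)^(1-ζ) * (j:ℝ)^(ζ-1) = r^(1-ζ) := by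
        rw [hrdef, Real.div_rpow hn0.le hj0.le, div_eq_mul_inv,
          show (ζ-1 : ℝ) = -(1-ζ) by ring, Real.rpow_neg hj0.le]
      refine le_trans hS1 ?_
      rw [hmn]
      calc (C * (j:ℝ)^(ζ-1)) * ((n:ℝ)^(1-ζ)/(1-ζ))
          = (C/(1-ζ)) * ((n:ℝ)^(1-ζ) * (j:ℝ)^(ζ-1)) := by ring
        _ = (C/(1-ζ)) * r^(1-ζ) := by rw [hrp]
        _ ≤ A * r^(1-ζ) := by
            apply mul_le_mul_of_nonneg_right _ (Real.rpow_nonneg hr0.le _)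
            rw [hA]; linarith
  · -- ζ = -θ
    subst hneg
    -- Σ₁ bound : each term ≤ C * j^{-1}
    have hterm1 : ∀ t ∈ Icc 1 m, |lam j t| ≤ C * (j:ℝ)^(-1:ℝ) := by
      intro t ht
      simp only [mem_Icc] at ht
      have ht0 : (0:ℝ) < (t:ℝ) := by exact_mod_cast ht.1
      have htj : t < j := by omega
      have hb := h2 j t ht.1 htj
      rw [show (-(-θ) : ℝ) = θ by ring] at hb
      have hmax : max ((j:ℝ)^θ) ((t:ℝ)^θ) = (j:ℝ)^θ := by
        apply max_eq_left
        exact Real.rpow_le_rpow ht0.le (by exact_mod_cast htj.le) hθ0.le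
      rw [hmax] at hb
      have hjpow : (j:ℝ)^(-θ-1) * (j:ℝ)^θ = (j:ℝ)^(-1:ℝ) := by
        rw [← Real.rpow_add hj0, show (-θ-1+θ : ℝ) = (-1:ℝ) by ring]
      calc |lam j t| ≤ C * (j:ℝ)^(-θ-1) * (j:ℝ)^θ := hb
        _ = C * ((j:ℝ)^(-θ-1) * (j:ℝ)^θ) := by ring
        _ = C * (j:ℝ)^(-1:ℝ) := by rw [hjpow]
    have hS1 : ∑ t ∈ Icc 1 m, |lam j t| ≤ (m:ℝ) * (C * (j:ℝ)^(-1:ℝ)) := by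
      have := Finset.sum_le_card_nsmul (Icc 1 m) (fun t => |lam j t|)
        (C * (j:ℝ)^(-1:ℝ)) hterm1
      rwa [Nat.card_Icc, nsmul_eq_mul, Nat.add_sub_cancel] at this
    -- Σ₂ bound
    have hterm2 : ∀ t ∈ Icc j n, |lam j t| ≤ (C * (j:ℝ)^(-θ)) * (t:ℝ)^(-(1-θ)) := by
      intro t ht
      simp only [mem_Icc] at ht
      have hb := h1 j t hj ht.1
      rw [show (-(-θ)-1 : ℝ) = -(1-θ) by ring] at hb
      exact le_of_le_of_eq hb (by ring)
    have hS2 : ∑ t ∈ Icc j n, |lam j t| ≤ (C/θ) * ((n:ℝ)^θ * (j:ℝ)^(-θ)) := by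
      have hsub : ∑ t ∈ Icc j n, (t:ℝ)^(-(1-θ)) ≤ ∑ t ∈ Icc 1 n, (t:ℝ)^(-(1-θ)) := by
        apply Finset.sum_le_sum_of_subset_of_nonneg
        · apply Finset.Icc_subset_Icc_left; omega
        · intro t _ _; exact Real.rpow_nonneg (Nat.cast_nonneg t) _
      have hAn := st14_A (δ := 1-θ) (by linarith) (by linarith) n
      rw [show (1 - (1-θ) : ℝ) = θ by ring] at hAn
      calc ∑ t ∈ Icc j n, |lam j t|
          ≤ ∑ t ∈ Icc j n, (C * (j:ℝ)^(-θ)) * (t:ℝ)^(-(1-θ)) := Finset.sum_le_sum hterm2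
        _ = (C * (j:ℝ)^(-θ)) * ∑ t ∈ Icc j n, (t:ℝ)^(-(1-θ)) := by rw [← Finset.mul_sum]
        _ ≤ (C * (j:ℝ)^(-θ)) * ((n:ℝ)^θ / θ) := by
            apply mul_le_mul_of_nonneg_left (le_trans hsub hAn) (by positivity)
        _ = (C/θ) * ((n:ℝ)^θ * (j:ℝ)^(-θ)) := by ring
    have hrpθ : (n:ℝ)^θ * (j:ℝ)^(-θ) = r^θ := by
      rw [hrdef, Real.div_rpow hn0.le hj0.le, div_eq_mul_inv, Real.rpow_neg hj0.le]
    rw [hrpθ] at hS2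
    by_cases hjn : j ≤ n
    · rw [if_pos hjn]
      have hr1 : (1:ℝ) ≤ r := by
        rw [hrdef, le_div_iff₀ hj0, one_mul]; exact_mod_cast hjn
      have hR1 : (1:ℝ) ≤ r ^ θ := Real.one_le_rpow hr1 hθ0.le
      have hR0 : (0:ℝ) ≤ r ^ θ := by linarith
      have hS1' : ∑ t ∈ Icc 1 m, |lam j t| ≤ C := by
        refine le_trans hS1 ?_
        have hjinv : (j:ℝ) * (j:ℝ)^(-1:ℝ) = 1 := by
          rw [Real.rpow_neg_one, mul_inv_cancel₀ (ne_of_gt hj0)]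
        have hjinv0 : (0:ℝ) ≤ (j:ℝ)^(-1:ℝ) := by positivity
        calc (m:ℝ) * (C * (j:ℝ)^(-1:ℝ)) ≤ (j:ℝ) * (C * (j:ℝ)^(-1:ℝ)) := by
              apply mul_le_mul_of_nonneg_right hmj (by positivity)
          _ = C * ((j:ℝ) * (j:ℝ)^(-1:ℝ)) := by ring
          _ = C := by rw [hjinv, mul_one]
      calc ∑ t ∈ Icc 1 m, |lam j t| + ∑ t ∈ Icc j n, |lam j t|
          ≤ C + (C/θ) * r^θ := add_le_add hS1' hS2
        _ ≤ C * r^θ + (C/θ) * r^θ := by nlinarith [mul_nonneg hC (sub_nonneg.mpr hR1)]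
        _ = (C + C/θ) * r^θ := by ring
        _ ≤ A * r^θ := by
            apply mul_le_mul_of_nonneg_right _ hR0
            rw [hA]; linarith
    · rw [if_neg hjn]
      push_neg at hjn
      have hmn : m = n := by omega
      have hempty : Icc j n = (∅ : Finset ℕ) := Finset.Icc_eq_empty (by omega)
      rw [hempty, Finset.sum_empty, add_zero]
      have hr1 : r ≤ 1 := by
        rw [hrdef, div_le_one hj0]; exact_mod_cast hjn.le
      have hrr : (n:ℝ) * (C * (j:ℝ)^(-1:ℝ)) = C * r := by
        rw [Real.rpow_neg_one, hrdef]; ring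
      have hrmono : r ≤ r^(1-θ) := by
        nth_rewrite 1 [show r = r^(1:ℝ) by rw [Real.rpow_one]]
        exact Real.rpow_le_rpow_of_exponent_ge hr0 hr1 (by linarith)
      refine le_trans hS1 ?_
      rw [hmn, hrr]
      calc C * r ≤ C * r^(1-θ) := mul_le_mul_of_nonneg_left hrmono hC
        _ ≤ A * r^(1-θ) := by
            apply mul_le_mul_of_nonneg_right _ (Real.rpow_nonneg hr0.le _)
            rw [hA]; linarith

theorem stmt14 (ζ : ℝ) (hζ1 : 0 < |ζ|) (hζ2 : |ζ| < 1 / 2)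
    (lam : ℕ → ℕ → ℝ) (C : ℝ)
    (h1 : ∀ j t : ℕ, 1 ≤ j → j ≤ t →
      |lam j t| ≤ C * (j : ℝ) ^ ζ * (t : ℝ) ^ (-ζ - 1))
    (h2 : ∀ j t : ℕ, 1 ≤ t → t < j →
      |lam j t| ≤ C * (j : ℝ) ^ (ζ - 1) * max ((j : ℝ) ^ (-ζ)) ((t : ℝ) ^ (-ζ))) :
    ∃ C' : ℝ, 0 < C' ∧ ∀ n : ℕ, 1 ≤ n →
      ∑' j : ℕ, (∑ t ∈ Finset.Icc 1 n, lam (j + 1) t) ^ 2 ≤ C' * n := by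
  have hC : 0 ≤ C := by
    have h := h1 1 1 le_rfl le_rfl
    simp only [Nat.cast_one, Real.one_rpow, mul_one] at h
    exact le_trans (abs_nonneg _) h
  set θ : ℝ := |ζ| with hθdef
  have hθ0 : 0 < θ := hζ1
  have hθh : θ < 1/2 := hζ2
  have hθ1 : θ < 1 := by linarith
  have hcase : ζ = θ ∨ ζ = -θ := by
    rcases abs_cases ζ with ⟨h, _⟩ | ⟨h, _⟩
    · left; rw [hθdef, h]
    · right; rw [hθdef, h, neg_neg]
  set A : ℝ := C*(1/θ + 1/(1-θ) + 2) + 1 with hAdef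
  have hA : A = C/θ + C/(1-θ) + 2*C + 1 := by rw [hAdef]; ring
  have hA0 : 0 < A := by
    have h1' : 0 ≤ C/θ := div_nonneg hC hθ0.le
    have h2' : 0 ≤ C/(1-θ) := div_nonneg hC (by linarith)
    rw [hA]; linarith
  set ε : ℝ := 1 - 2*θ with hεdef
  have hε0 : 0 < ε := by rw [hεdef]; linarith
  have hε1 : ε ≤ 1 := by rw [hεdef]; linarith
  refine ⟨2*A^2/ε + 1, by positivity, ?_⟩
  intro n hn
  have hn0 : (0:ℝ) < (n:ℝ) := by exact_mod_cast hn
  -- dominating function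
  set g : ℕ → ℝ := fun j =>
    (A * (if j+1 ≤ n then ((n:ℝ)/((j+1:ℕ):ℝ)) ^ θ else ((n:ℝ)/((j+1:ℕ):ℝ)) ^ (1-θ)))^2
    with hgdef
  have hg_nonneg : ∀ j, 0 ≤ g j := fun j => sq_nonneg _
  have hfg : ∀ j, (∑ t ∈ Finset.Icc 1 n, lam (j + 1) t) ^ 2 ≤ g j := by
    intro j
    have hkey := st14_key ζ θ hθ0 hθh hcase lam C hC h1 h2 n (j+1) hn (by omega)
    have habs : |∑ t ∈ Finset.Icc 1 n, lam (j + 1) t|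
        ≤ A * (if j+1 ≤ n then ((n:ℝ)/((j+1:ℕ):ℝ)) ^ θ else ((n:ℝ)/((j+1:ℕ):ℝ)) ^ (1-θ)) :=
      le_trans (Finset.abs_sum_le_sum_abs _ _) hkey
    calc (∑ t ∈ Finset.Icc 1 n, lam (j + 1) t) ^ 2
        = |∑ t ∈ Finset.Icc 1 n, lam (j + 1) t| ^ 2 := (sq_abs _).symm
      _ ≤ _ := pow_le_pow_left₀ (abs_nonneg _) habs 2
  -- squaring helper
  have hsq : ∀ (m : ℕ) (p : ℝ), (0:ℝ) < (m:ℝ) →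
      (((n:ℝ)/(m:ℝ)) ^ p)^2 = (n:ℝ)^(2*p) * (m:ℝ)^(-(2*p)) := by
    intro m p hm
    have hd : (0:ℝ) ≤ (n:ℝ)/(m:ℝ) := by positivity
    rw [← Real.rpow_natCast (((n:ℝ)/(m:ℝ))^p) 2, ← Real.rpow_mul hd,
      show (p * ((2:ℕ):ℝ) : ℝ) = 2*p by push_cast; ring,
      Real.div_rpow hn0.le hm.le, div_eq_mul_inv, ← Real.rpow_neg hm.le]
  -- head terms
  have hg1 : ∀ j, j < n → g j = A^2 * ((n:ℝ)^(2*θ) * ((j+1:ℕ):ℝ)^(-(2*θ))) := by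
    intro j hj
    have hm0 : (0:ℝ) < ((j+1:ℕ):ℝ) := by positivity
    rw [hgdef]
    simp only []
    rw [if_pos (by omega : j+1 ≤ n), mul_pow, hsq (j+1) θ hm0]
  -- tail terms
  have hg2 : ∀ i : ℕ, g (i + n) = A^2 * ((n:ℝ)^(1+ε) * ((n+1+i:ℕ):ℝ)^(-1-ε)) := by
    intro i
    have hcast : (i + n) + 1 = n + 1 + i := by omega
    have hm0 : (0:ℝ) < ((n+1+i:ℕ):ℝ) := by positivity
    rw [hgdef]
    simp only []
    rw [hcast, if_neg (by omega : ¬ n+1+i ≤ n), mul_pow, hsq (n+1+i) (1-θ) hm0,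
      show (2*(1-θ) : ℝ) = 1 + ε by rw [hεdef]; ring,
      show (-(1+ε) : ℝ) = -1-ε by ring]
  -- tail partial sums
  have hT2 : ∀ N, ∑ i ∈ range N, g (i + n) ≤ A^2/ε * n := by
    intro N
    have hsum : ∑ i ∈ range N, g (i + n)
        = A^2 * (n:ℝ)^(1+ε) * ∑ i ∈ range N, ((n+1+i:ℕ):ℝ)^(-1-ε) := by
      rw [Finset.mul_sum]
      exact Finset.sum_congr rfl (fun i _ => by rw [hg2 i]; ring)
    rw [hsum]
    have htail := st14_range_tail hε0 hε1 n hn N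
    have hnn : (n:ℝ)^(1+ε) * ((n:ℝ)^(-ε)) = n := by
      rw [← Real.rpow_add hn0, show (1+ε+-ε : ℝ) = 1 by ring, Real.rpow_one]
    calc A^2 * (n:ℝ)^(1+ε) * ∑ i ∈ range N, ((n+1+i:ℕ):ℝ)^(-1-ε)
        ≤ A^2 * (n:ℝ)^(1+ε) * ((1/ε) * (n:ℝ)^(-ε)) := by
          apply mul_le_mul_of_nonneg_left htail (by positivity)
      _ = A^2/ε * ((n:ℝ)^(1+ε) * (n:ℝ)^(-ε)) := by ring
      _ = A^2/ε * n := by rw [hnn]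
  have htail_nonneg : ∀ i, 0 ≤ g (i + n) := fun i => hg_nonneg _
  have htail_summable : Summable (fun i => g (i + n)) :=
    summable_of_sum_range_le htail_nonneg hT2
  have hg_summable : Summable g := (summable_nat_add_iff n).mp htail_summable
  have htail_tsum : ∑' i, g (i + n) ≤ A^2/ε * n :=
    Real.tsum_le_of_sum_range_le htail_nonneg hT2
  -- head sum
  have hhead : ∑ j ∈ range n, g j ≤ A^2/ε * n := by
    have hsum : ∑ j ∈ range n, g j
        = A^2 * (n:ℝ)^(2*θ) * ∑ j ∈ range n, ((j+1:ℕ):ℝ)^(-(2*θ)) := by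
      rw [Finset.mul_sum]
      refine Finset.sum_congr rfl (fun j hj => ?_)
      rw [hg1 j (Finset.mem_range.mp hj)]; ring
    have hreindex : ∑ j ∈ range n, ((j+1:ℕ):ℝ)^(-(2*θ))
        = ∑ t ∈ Icc 1 n, (t:ℝ)^(-(2*θ)) := by
      rw [show Icc 1 n = Ico 1 (n+1) by rw [Finset.Ico_add_one_right_eq_Icc],
        Finset.sum_Ico_eq_sum_range]
      simp only [Nat.add_sub_cancel]
      exact Finset.sum_congr rfl (fun i _ => by rw [Nat.add_comm])
    have hbound := st14_A (δ := 2*θ) (by linarith) (by linarith) n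
    have hnn : (n:ℝ)^(2*θ) * ((n:ℝ)^(1-2*θ)/(1-2*θ)) = n/ε := by
      rw [div_eq_mul_inv, ← mul_assoc, ← Real.rpow_add hn0,
        show (2*θ+(1-2*θ) : ℝ) = 1 by ring, Real.rpow_one, hεdef, ← div_eq_mul_inv]
    rw [hsum, hreindex]
    calc A^2 * (n:ℝ)^(2*θ) * ∑ t ∈ Icc 1 n, (t:ℝ)^(-(2*θ))
        ≤ A^2 * (n:ℝ)^(2*θ) * ((n:ℝ)^(1-2*θ)/(1-2*θ)) := by
          apply mul_le_mul_of_nonneg_left hbound (by positivity)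
      _ = A^2 * ((n:ℝ)^(2*θ) * ((n:ℝ)^(1-2*θ)/(1-2*θ))) := by ring
      _ = A^2 * ((n:ℝ)/ε) := by rw [hnn]
      _ = A^2/ε * n := by ring
  -- put together
  have hf_summable : Summable (fun j => (∑ t ∈ Finset.Icc 1 n, lam (j + 1) t) ^ 2) :=
    Summable.of_nonneg_of_le (fun j => sq_nonneg _) hfg hg_summable
  have hgsplit : ∑' j, g j = ∑ j ∈ range n, g j + ∑' i, g (i + n) :=
    (Summable.sum_add_tsum_nat_add n hg_summable).symm
  calc ∑' j : ℕ, (∑ t ∈ Finset.Icc 1 n, lam (j + 1) t) ^ 2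
      ≤ ∑' j, g j := Summable.tsum_le_tsum hfg hf_summable hg_summable
    _ = ∑ j ∈ range n, g j + ∑' i, g (i + n) := hgsplit
    _ ≤ A^2/ε * n + A^2/ε * n := add_le_add hhead htail_tsum
    _ = 2*A^2/ε * n := by ring
    _ ≤ (2*A^2/ε + 1) * n := by nlinarith [hn0]
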